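/- For 0 < q < 1, Re(t) > 0, and any complex s, the series ∑_{n=1}^∞ q^{nt}/[n]_q^s, where [n]_q = (1-q^n)/(1-q), converges absolutely and equals (1-q)^s · ∑_{r=0}^∞ C(s+r-1, r) · q^{t+r}/(1-q^{t+r}), where C(s+r-1,r) is the generalized binomial coefficient. -/

import Mathlib

open Complex Metric

lemma slit_of_ball {z : ℂ} (hz : z ∈ ball (0:ℂ) 1) : 1 - z ∈ Complex.slitPlane := by
  rw [mem_ball_zero_iff] at hz
  refine Complex.mem_slitPlane_iff.mpr (Or.inl ?_)
  have : z.re < 1 := lt_of_le_of_lt (Complex.re_le_norm z) hz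
  simp [Complex.sub_re]; linarith

lemma hasDerivAt_one_sub_cpow (w : ℂ) {z : ℂ} (hz : z ∈ ball (0:ℂ) 1) :
    HasDerivAt (fun z : ℂ => (1 - z) ^ w) (w * (1 - z) ^ (w - 1) * (-1)) z := by
  exact (((hasDerivAt_id z).const_sub 1)).cpow_const (slit_of_ball hz)

lemma iteratedDeriv_one_sub_cpow (s : ℂ) (n : ℕ) :
    Set.EqOn (iteratedDeriv n (fun z : ℂ => (1 - z) ^ (-s)))
      (fun z => (ascPochhammer ℂ n).eval s * (1 - z) ^ (-s - n)) (ball (0:ℂ) 1) := by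
  induction n with
  | zero => intro z hz; simp
  | succ n ih =>
    intro z hz
    rw [iteratedDeriv_succ]
    have hev : deriv (iteratedDeriv n (fun z : ℂ => (1 - z) ^ (-s))) z
        = deriv (fun z => (ascPochhammer ℂ n).eval s * (1 - z) ^ (-s - n)) z := by
      apply Filter.EventuallyEq.deriv_eq
      exact Filter.eventuallyEq_of_mem (isOpen_ball.mem_nhds hz) ih
    rw [hev]
    have hd := ((hasDerivAt_one_sub_cpow (-s - n) hz).const_mul
      ((ascPochhammer ℂ n).eval s)).deriv
    rw [hd, ascPochhammer_succ_eval]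
    push_cast
    rw [show -s - ((n:ℂ)+1) = (-s - n) - 1 by ring]
    ring

lemma binomial_hasSum (s : ℂ) {x : ℂ} (hx : ‖x‖ < 1) :
    HasSum (fun r : ℕ => (ascPochhammer ℂ r).eval s / (r.factorial : ℂ) * x ^ r)
      ((1 - x) ^ (-s)) := by
  have hd : DifferentiableOn ℂ (fun z : ℂ => (1 - z) ^ (-s)) (ball (0:ℂ) 1) := fun z hz =>
    ((hasDerivAt_one_sub_cpow (-s) hz).differentiableAt).differentiableWithinAt
  have H := Complex.hasSum_taylorSeries_on_ball hd (mem_ball_zero_iff.mpr hx)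
  convert H using 2 with r
  case e'_3 => rfl
  rw [iteratedDeriv_one_sub_cpow s r (mem_ball_zero_iff.mpr (by simp))]
  simp only [sub_zero, smul_eq_mul]
  rw [Complex.one_cpow]
  field_simp

lemma term_eq (q : ℝ) (hq0 : 0 < q) (hq1 : q < 1) (s w : ℂ) (n : ℕ) :
    (q : ℂ) ^ w / (((1 - (q : ℂ) ^ (n + 1)) / (1 - (q : ℂ))) ^ s)
      = (1 - (q : ℂ)) ^ s * ((q : ℂ) ^ w * (1 - (q : ℂ) ^ (n + 1)) ^ (-s)) := by
  have hx : (0:ℝ) < 1 - q^(n+1) := by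
    have : q ^ (n+1) < 1 := pow_lt_one₀ hq0.le hq1 (by omega); linarith
  have hy : (0:ℝ) < 1 - q := by linarith
  have hxc : (1 - (q : ℂ) ^ (n + 1)) = ((1 - q^(n+1) : ℝ) : ℂ) := by push_cast; ring
  have hyc : (1 - (q : ℂ)) = ((1 - q : ℝ) : ℂ) := by push_cast; ring
  rw [hxc, hyc]
  have hdiv : (((1 - q^(n+1) : ℝ) : ℂ) / ((1 - q : ℝ) : ℂ)) ^ s
      = ((1 - q^(n+1) : ℝ) : ℂ) ^ s * (((1 - q : ℝ) : ℂ) ^ s)⁻¹ := by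
    rw [show (((1 - q^(n+1) : ℝ) : ℂ) / ((1 - q : ℝ) : ℂ))
        = (((1 - q^(n+1)) * (1 - q)⁻¹ : ℝ) : ℂ) by push_cast; ring, Complex.ofReal_mul,
      Complex.mul_cpow_ofReal_nonneg hx.le (inv_nonneg.mpr hy.le),
      show (((1 - q)⁻¹ : ℝ) : ℂ) = (((1 - q : ℝ) : ℂ))⁻¹ by push_cast; ring,
      Complex.inv_cpow]
    rw [Complex.arg_ofReal_of_nonneg hy.le]
    exact Real.pi_ne_zero.symm
  rw [hdiv, Complex.cpow_neg]
  have h1 : ((1 - q^(n+1) : ℝ) : ℂ) ^ s ≠ 0 := by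
    rw [Ne, Complex.cpow_eq_zero_iff]
    simp only [not_and]
    intro h; exact absurd h (by exact_mod_cast hx.ne')
  have h2 : (((1 - q : ℝ) : ℂ)) ^ s ≠ 0 := by
    rw [Ne, Complex.cpow_eq_zero_iff]
    simp only [not_and]
    intro h; exact absurd h (by exact_mod_cast hy.ne')
  field_simp

theorem stmt_0 (q : ℝ) (hq0 : 0 < q) (hq1 : q < 1) (s t : ℂ) (ht : 0 < t.re) :
    Summable (fun n : ℕ =>
      ‖(q : ℂ) ^ (((n : ℂ) + 1) * t) / (((1 - (q : ℂ) ^ (n + 1)) / (1 - (q : ℂ))) ^ s)‖) ∧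
    ∑' n : ℕ, (q : ℂ) ^ (((n : ℂ) + 1) * t) / (((1 - (q : ℂ) ^ (n + 1)) / (1 - (q : ℂ))) ^ s)
      = (1 - (q : ℂ)) ^ s *
        ∑' r : ℕ, ((ascPochhammer ℂ r).eval s / (r.factorial : ℂ)) *
          ((q : ℂ) ^ (t + (r : ℂ)) / (1 - (q : ℂ) ^ (t + (r : ℂ)))) := by
  have hqc : ((q:ℂ)) ≠ 0 := by exact_mod_cast hq0.ne'
  have hnq : ‖(q:ℂ)‖ = q := by simp [Complex.norm_real, abs_of_pos hq0]
  set b : ℕ → ℂ := fun r => (ascPochhammer ℂ r).eval s / (r.factorial : ℂ) with hb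
  set z : ℕ → ℂ := fun r => (q:ℂ) ^ (t + (r:ℂ)) with hz
  have hzeq : ∀ r : ℕ, ‖z r‖ = q ^ t.re * q ^ r := by
    intro r
    have h := Complex.norm_cpow_eq_rpow_re_of_pos hq0 (t + (r:ℂ))
    have h2 : (t + (r:ℂ)).re = t.re + (r:ℝ) := by simp
    rw [hz]
    rw [h, h2, Real.rpow_add hq0, Real.rpow_natCast]
  have hqt1 : q ^ t.re < 1 := Real.rpow_lt_one hq0.le hq1 ht
  have hqtpos : (0:ℝ) < q ^ t.re := Real.rpow_pos_of_pos hq0 _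
  have hzlt : ∀ r : ℕ, ‖z r‖ < 1 := by
    intro r; rw [hzeq r]
    calc q ^ t.re * q ^ r ≤ q ^ t.re * 1 := by
          gcongr; exact pow_le_one₀ hq0.le hq1.le
      _ < 1 := by rw [mul_one]; exact hqt1
  set G : ℕ → ℕ → ℂ := fun r n => b r * (z r) ^ (n + 1) with hG
  -- row sums
  have row : ∀ r : ℕ, HasSum (fun n => G r n) (b r * (z r / (1 - z r))) := by
    intro r
    have h := (hasSum_geometric_of_norm_lt_one (hzlt r)).mul_left (b r * z r)
    have he : (fun n : ℕ => b r * z r * (z r) ^ n) = fun n => G r n := by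
      funext n; simp only [hG]; ring
    rw [he] at h
    convert h using 1
    case e'_3 => rfl
    rw [div_eq_mul_inv]; ring
  -- column sums
  have col : ∀ n : ℕ, HasSum (fun r => G r n)
      ((q:ℂ) ^ (((n:ℂ)+1) * t) * (1 - (q:ℂ) ^ (n+1)) ^ (-s)) := by
    intro n
    have hy : ‖(q:ℂ) ^ (n+1)‖ < 1 := by
      rw [norm_pow, hnq]; exact pow_lt_one₀ hq0.le hq1 (by omega)
    have h := (binomial_hasSum s hy).mul_left ((q:ℂ) ^ (((n:ℂ)+1) * t))
    have he : (fun r : ℕ => (q:ℂ) ^ (((n:ℂ)+1) * t) *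
        ((ascPochhammer ℂ r).eval s / (r.factorial : ℂ) * ((q:ℂ) ^ (n+1)) ^ r))
        = fun r => G r n := by
      funext r
      have e1 : (z r) ^ (n+1) = (q:ℂ) ^ (((n:ℂ)+1) * t) * ((q:ℂ)^(n+1)) ^ r := by
        rw [hz]
        rw [← Complex.cpow_nat_mul]
        rw [show ((n+1 : ℕ):ℂ) * (t + (r:ℂ)) = ((n:ℂ)+1)*t + ((n:ℂ)+1)*(r:ℂ) by
          push_cast; ring]
        rw [Complex.cpow_add _ _ hqc]
        congr 1
        rw [show ((n:ℂ)+1)*(r:ℂ) = (((n+1)*r : ℕ) : ℂ) by push_cast; ring,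
          Complex.cpow_natCast, pow_mul]
      simp only [hG, hb, e1]; ring
    rw [he] at h; exact h
  -- summability of norms over the product
  have hGnorm : Summable (fun p : ℕ × ℕ => ‖G p.1 p.2‖) := by
    rw [summable_prod_of_nonneg (fun p => norm_nonneg _)]
    constructor
    · intro r
      have hgeo : Summable (fun n : ℕ => ‖z r‖ ^ n) :=
        summable_geometric_of_lt_one (norm_nonneg _) (hzlt r)
      refine (hgeo.mul_left (‖b r‖ * ‖z r‖)).congr fun n => ?_
      simp only [hG, norm_mul, norm_pow, pow_succ]; ring
    · have hbq : Summable (fun r => ‖b r‖ * q ^ r) := by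
        have h1 : ‖(q:ℂ)‖ < 1 := by rw [hnq]; exact hq1
        have h2 := summable_norm_iff.mpr (binomial_hasSum s h1).summable
        refine h2.congr fun r => ?_
        rw [norm_mul, norm_pow, hnq]
      apply Summable.of_nonneg_of_le (fun r => tsum_nonneg fun n => norm_nonneg _)
        (fun r => ?_) (hbq.mul_right (q ^ t.re * (1 - q ^ t.re)⁻¹))
      have hgeo := hasSum_geometric_of_lt_one (norm_nonneg (z r)) (hzlt r)
      have hval : ∑' n, ‖G r n‖ = ‖b r‖ * ‖z r‖ * (1 - ‖z r‖)⁻¹ := by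
        rw [show (fun n : ℕ => ‖G r n‖) = fun n => ‖b r‖ * ‖z r‖ * ‖z r‖ ^ n from
          funext fun n => by simp only [hG, norm_mul, norm_pow, pow_succ]; ring]
        exact (hgeo.mul_left (‖b r‖ * ‖z r‖)).tsum_eq
      rw [hval, hzeq r]
      have hrle : q ^ t.re * q ^ r ≤ q ^ t.re := by
        calc q ^ t.re * q ^ r ≤ q ^ t.re * 1 := by
              gcongr; exact pow_le_one₀ hq0.le hq1.le
          _ = q ^ t.re := mul_one _
      have hle : (1 - q ^ t.re * q ^ r)⁻¹ ≤ (1 - q ^ t.re)⁻¹ := by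
        apply inv_anti₀ (by linarith) (by linarith)
      calc ‖b r‖ * (q ^ t.re * q ^ r) * (1 - q ^ t.re * q ^ r)⁻¹
          = (‖b r‖ * q ^ r * q ^ t.re) * (1 - q ^ t.re * q ^ r)⁻¹ := by ring
        _ ≤ (‖b r‖ * q ^ r * q ^ t.re) * (1 - q ^ t.re)⁻¹ :=
            mul_le_mul_of_nonneg_left hle (by positivity)
        _ = ‖b r‖ * q ^ r * (q ^ t.re * (1 - q ^ t.re)⁻¹) := by ring
  have hGsum : Summable (Function.uncurry G) := summable_norm_iff.mp hGnorm
  have hGnorm2 : Summable (fun p : ℕ × ℕ => ‖G p.2 p.1‖) :=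
    ((Equiv.prodComm ℕ ℕ).summable_iff).mp hGnorm
  have hcolnorm : ∀ n, Summable (fun r => ‖G r n‖) := fun n => hGnorm2.prod_factor n
  have hcolsumnorm : Summable (fun n => ∑' r, ‖G r n‖) :=
    ((summable_prod_of_nonneg (fun _ => norm_nonneg _)).mp hGnorm2).2
  have key : ∀ n : ℕ, (q:ℂ) ^ (((n:ℂ)+1)*t) / (((1 - (q:ℂ)^(n+1))/(1 - (q:ℂ)))^s)
      = (1 - (q:ℂ)) ^ s * ∑' r, G r n := by
    intro n
    rw [term_eq q hq0 hq1 s _ n, (col n).tsum_eq]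
  constructor
  · apply Summable.of_nonneg_of_le (fun n => norm_nonneg _) (fun n => ?_)
      (hcolsumnorm.mul_left ‖(1 - (q:ℂ)) ^ s‖)
    rw [key n, norm_mul]
    exact mul_le_mul_of_nonneg_left (norm_tsum_le_tsum_norm (hcolnorm n)) (norm_nonneg _)
  · calc ∑' n : ℕ, (q:ℂ) ^ (((n:ℂ)+1)*t) / (((1 - (q:ℂ)^(n+1))/(1 - (q:ℂ)))^s)
        = ∑' n : ℕ, (1 - (q:ℂ))^s * ∑' r, G r n := tsum_congr key
      _ = (1-(q:ℂ))^s * ∑' n : ℕ, ∑' r, G r n := tsum_mul_left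
      _ = (1-(q:ℂ))^s * ∑' r : ℕ, ∑' n, G r n := by rw [Summable.tsum_comm hGsum]
      _ = _ := by
          congr 1
          refine tsum_congr fun r => ?_
          rw [(row r).tsum_eq]
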